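/- Under the standing assumptions, for every integer p ≥ 2, every θ ∈ ℝ^d, every ε_h ∈ (0,1/2], every 0 < λ ≤ min{1, 1/(8a)} and every s ∈ (0,1], the one-step drift map satisfies |θ − λ s h_λ(θ)|^{2p} ≤ (1 − aλs/2)^{p−1}(1 − aλs)|θ|^{2p} + λ s (1 + 2/a)^{p−1} (2b + 8K_h²)^p. -/

import Mathlib

open Real

lemma kTULA_weighted_add_pow_le (A B δ : ℝ) (hA : 0 ≤ A) (hB : 0 ≤ B) (hδ : 0 < δ) (m : ℕ) :
    (A + B) ^ (m + 1) ≤ (1 + δ) ^ m * A ^ (m + 1) + ((1 + δ) / δ) ^ m * B ^ (m + 1) := by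
  have h1δ : (0:ℝ) < 1 + δ := by linarith
  have hx : (0:ℝ) ≤ (1 + δ) * A := by positivity
  have hy : (0:ℝ) ≤ ((1 + δ) / δ) * B := by positivity
  have hc := (convexOn_pow (m + 1)).2 (Set.mem_Ici.2 hx) (Set.mem_Ici.2 hy)
      (by positivity : (0:ℝ) ≤ 1 / (1 + δ)) (by positivity : (0:ℝ) ≤ δ / (1 + δ))
      (by field_simp)
  simp only [smul_eq_mul] at hc
  have e1 : 1 / (1 + δ) * ((1 + δ) * A) + δ / (1 + δ) * (((1 + δ) / δ) * B) = A + B := by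
    field_simp
  rw [e1] at hc
  refine hc.trans_eq ?_
  rw [mul_pow, mul_pow, pow_succ (1+δ), pow_succ ((1+δ)/δ)]
  field_simp

set_option maxHeartbeats 4000000 in
theorem kTULA_one_step_contraction_2p
    {d : ℕ} (hd : 0 < d)
    (u : EuclideanSpace ℝ (Fin d) → ℝ) (hu : ContDiff ℝ 3 u)
    (h : EuclideanSpace ℝ (Fin d) → EuclideanSpace ℝ (Fin d))
    (H : EuclideanSpace ℝ (Fin d) →
      EuclideanSpace ℝ (Fin d) →L[ℝ] EuclideanSpace ℝ (Fin d))
    (hgrad : ∀ θ, h θ = gradient u θ)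
    (hHess : ∀ θ, H θ = fderiv ℝ (gradient u) θ)
    (L K_H K_h a b : ℝ)
    (hL : 0 < L) (hK_H : 0 < K_H) (hK_h : 0 < K_h) (ha : 0 < a) (hb : 0 < b)
    (l : ℕ) (hl : 1 ≤ l)
    (hH_lip : ∀ θ θ' : EuclideanSpace ℝ (Fin d),
      ‖H θ - H θ'‖ ≤ L * (1 + ‖θ‖ + ‖θ'‖) ^ (l - 1) * ‖θ - θ'‖)
    (hH_bd : ∀ θ : EuclideanSpace ℝ (Fin d), ‖H θ‖ ≤ K_H * (1 + ‖θ‖ ^ l))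
    (hh_bd : ∀ θ : EuclideanSpace ℝ (Fin d), ‖h θ‖ ≤ K_h * (1 + ‖θ‖ ^ (l + 1)))
    (hdiss : ∀ θ : EuclideanSpace ℝ (Fin d), a * ‖θ‖ ^ 2 - b ≤ (inner ℝ (h θ) θ : ℝ))
    (hlam : ℝ → ℝ → EuclideanSpace ℝ (Fin d) → EuclideanSpace ℝ (Fin d))
    (hlam_def : ∀ (lam eps : ℝ) (θ : EuclideanSpace ℝ (Fin d)),
      hlam lam eps θ =
        a • θ + ((1 + lam * ‖θ‖ ^ (((l : ℝ) + 1) / eps)) ^ eps)⁻¹ • (h θ - a • θ)) :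
    ∀ (p : ℕ), 2 ≤ p →
    ∀ (θ : EuclideanSpace ℝ (Fin d)) (lam eps s : ℝ),
      0 < eps → eps ≤ 1 / 2 →
      0 < lam → lam ≤ min 1 (1 / (8 * a)) →
      0 < s → s ≤ 1 →
      ‖θ - (lam * s) • hlam lam eps θ‖ ^ (2 * p) ≤
        (1 - a * lam * s / 2) ^ (p - 1) * (1 - a * lam * s) * ‖θ‖ ^ (2 * p) +
          lam * s * (1 + 2 / a) ^ (p - 1) * (2 * b + 8 * K_h ^ 2) ^ p := by
  intro p hp θ lam eps s heps0 heps2 hlam0 hlamle hs0 hs1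
  obtain ⟨m, rfl⟩ : ∃ m, p = m + 1 := ⟨p - 1, by omega⟩
  simp only [Nat.add_sub_cancel]
  have hlam1 : lam ≤ 1 := (le_min_iff.1 hlamle).1
  have hlam8 : lam ≤ 1 / (8 * a) := (le_min_iff.1 hlamle).2
  set γ := lam * s with hγdef
  have hγ0 : 0 < γ := mul_pos hlam0 hs0
  have hγlam : γ ≤ lam := (mul_le_mul_of_nonneg_left hs1 hlam0.le).trans_eq (mul_one lam)
  have hγ1 : γ ≤ 1 := hγlam.trans hlam1
  have haγ : a * γ ≤ 1 / 8 := by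
    have h1 : a * lam ≤ a * (1 / (8 * a)) := mul_le_mul_of_nonneg_left hlam8 ha.le
    have h2 : a * (1 / (8 * a)) = 1 / 8 := by field_simp
    have h3 : a * γ ≤ a * lam := mul_le_mul_of_nonneg_left hγlam ha.le
    linarith
  have hDpos : 0 < a * γ := mul_pos ha hγ0
  rw [show a * lam * s = a * γ by rw [hγdef]; ring]
  -- the taming denominator
  set T := (1 + lam * ‖θ‖ ^ (((l : ℝ) + 1) / eps)) ^ eps with hTdef
  have hbase0 : (0:ℝ) ≤ lam * ‖θ‖ ^ (((l : ℝ) + 1) / eps) := by positivity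
  have hT1 : 1 ≤ T := by
    calc (1:ℝ) = 1 ^ eps := (Real.one_rpow eps).symm
    _ ≤ T := Real.rpow_le_rpow zero_le_one (by linarith) heps0.le
  have hTpos : 0 < T := lt_of_lt_of_le one_pos hT1
  have hTinv_le : T⁻¹ ≤ 1 := by
    rw [inv_le_one_iff₀]; right; exact hT1
  have hTinv_nonneg : (0:ℝ) ≤ T⁻¹ := inv_nonneg.2 hTpos.le
  have hsplit : (lam * ‖θ‖ ^ (((l : ℝ) + 1) / eps)) ^ eps = lam ^ eps * ‖θ‖ ^ (l + 1) := by
    rw [Real.mul_rpow hlam0.le (Real.rpow_nonneg (norm_nonneg θ) _)]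
    congr 1
    rw [← Real.rpow_natCast ‖θ‖ (l + 1), ← Real.rpow_mul (norm_nonneg θ)]
    congr 1
    push_cast
    field_simp
  have hmono : lam ^ eps * ‖θ‖ ^ (l + 1) ≤ T := by
    rw [← hsplit]
    exact Real.rpow_le_rpow hbase0 (by linarith) heps0.le
  have hlp : 0 < lam ^ eps := Real.rpow_pos_of_pos hlam0 eps
  have hN : T⁻¹ * ‖θ‖ ^ (l + 1) ≤ lam ^ (-eps) := by
    rw [Real.rpow_neg hlam0.le]
    have key : lam ^ eps * (T⁻¹ * ‖θ‖ ^ (l + 1)) ≤ 1 := by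
      rw [show lam ^ eps * (T⁻¹ * ‖θ‖ ^ (l + 1)) = (lam ^ eps * ‖θ‖ ^ (l + 1)) * T⁻¹ by ring,
        ← div_eq_mul_inv, div_le_one hTpos]
      exact hmono
    rw [inv_eq_one_div (lam ^ eps), le_div_iff₀ hlp]
    calc T⁻¹ * ‖θ‖ ^ (l + 1) * lam ^ eps = lam ^ eps * (T⁻¹ * ‖θ‖ ^ (l + 1)) := by ring
    _ ≤ 1 := key
  have hM1 : 1 ≤ lam ^ (-eps) := by
    calc (1:ℝ) = lam ^ (0:ℝ) := (Real.rpow_zero lam).symm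
    _ ≤ lam ^ (-eps) := Real.rpow_le_rpow_of_exponent_ge hlam0 hlam1 (by linarith)
  have hMeps : lam ^ (-eps) ≤ lam ^ (-(1/2) : ℝ) :=
    Real.rpow_le_rpow_of_exponent_ge hlam0 hlam1 (by linarith)
  have hMsq : (lam ^ (-(1/2) : ℝ)) ^ (2:ℕ) = lam⁻¹ := by
    rw [← Real.rpow_natCast (lam ^ (-(1/2):ℝ)) 2, ← Real.rpow_mul hlam0.le]
    norm_num
    exact Real.rpow_neg_one lam
  set M := lam ^ (-(1/2) : ℝ) with hMdef
  have hM0 : 0 < M := Real.rpow_pos_of_pos hlam0 _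
  have hhT : T⁻¹ * ‖h θ‖ ≤ 2 * K_h * M := by
    calc T⁻¹ * ‖h θ‖ ≤ T⁻¹ * (K_h * (1 + ‖θ‖ ^ (l + 1))) :=
          mul_le_mul_of_nonneg_left (hh_bd θ) hTinv_nonneg
    _ = K_h * (T⁻¹ + T⁻¹ * ‖θ‖ ^ (l + 1)) := by ring
    _ ≤ K_h * (lam ^ (-eps) + lam ^ (-eps)) := by
        apply mul_le_mul_of_nonneg_left _ hK_h.le
        have := hTinv_le.trans hM1
        linarith [hN]
    _ = 2 * K_h * lam ^ (-eps) := by ring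
    _ ≤ 2 * K_h * M := mul_le_mul_of_nonneg_left hMeps (by linarith)
  set v := hlam lam eps θ with hvdef
  have hv : ‖v‖ ≤ 2 * a * ‖θ‖ + 2 * K_h * M := by
    rw [hvdef, hlam_def, ← hTdef]
    calc ‖a • θ + T⁻¹ • (h θ - a • θ)‖ ≤ ‖a • θ‖ + ‖T⁻¹ • (h θ - a • θ)‖ := norm_add_le _ _
    _ = a * ‖θ‖ + T⁻¹ * ‖h θ - a • θ‖ := by
        rw [norm_smul, norm_smul, Real.norm_eq_abs, Real.norm_eq_abs,
          abs_of_pos ha, abs_of_nonneg hTinv_nonneg]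
    _ ≤ a * ‖θ‖ + T⁻¹ * (‖h θ‖ + a * ‖θ‖) := by
        have h1 : ‖h θ - a • θ‖ ≤ ‖h θ‖ + a * ‖θ‖ := by
          calc ‖h θ - a • θ‖ ≤ ‖h θ‖ + ‖a • θ‖ := norm_sub_le _ _
          _ = ‖h θ‖ + a * ‖θ‖ := by rw [norm_smul, Real.norm_eq_abs, abs_of_pos ha]
        exact add_le_add_right (mul_le_mul_of_nonneg_left h1 hTinv_nonneg) _
    _ ≤ 2 * a * ‖θ‖ + 2 * K_h * M := by
        have h2 : T⁻¹ * (a * ‖θ‖) ≤ a * ‖θ‖ := by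
          linarith [mul_nonneg (mul_nonneg ha.le (norm_nonneg θ)) (sub_nonneg.2 hTinv_le)]
        linarith [hhT]
  have hvsq : ‖v‖ ^ 2 ≤ 8 * a ^ 2 * ‖θ‖ ^ 2 + 8 * K_h ^ 2 * lam⁻¹ := by
    have h1 : ‖v‖ ^ 2 ≤ (2 * a * ‖θ‖ + 2 * K_h * M) ^ 2 :=
      pow_le_pow_left₀ (norm_nonneg v) hv 2
    rw [← hMsq]
    linarith [sq_nonneg (2 * a * ‖θ‖ - 2 * K_h * M), h1]
  have hinner : a * ‖θ‖ ^ 2 - b ≤ (inner ℝ v θ : ℝ) := by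
    rw [hvdef, hlam_def, ← hTdef, inner_add_left, real_inner_smul_left, real_inner_smul_left,
      inner_sub_left, real_inner_smul_left, real_inner_self_eq_norm_sq]
    have hd1 := hdiss θ
    have h1 : (0:ℝ) ≤ T⁻¹ * ((inner ℝ (h θ) θ : ℝ) - a * ‖θ‖ ^ 2 + b) :=
      mul_nonneg hTinv_nonneg (by linarith)
    have h2 : T⁻¹ * b ≤ b := by
      linarith [mul_nonneg (sub_nonneg.2 hTinv_le) hb.le]
    linarith
  have hbase : ‖θ - γ • v‖ ^ 2 ≤ (1 - a * γ) * ‖θ‖ ^ 2 + γ * (2 * b + 8 * K_h ^ 2) := by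
    rw [norm_sub_sq_real, real_inner_smul_right]
    have e : ‖γ • v‖ ^ 2 = γ ^ 2 * ‖v‖ ^ 2 := by
      rw [norm_smul, mul_pow, Real.norm_eq_abs, sq_abs]
    have hcomm : (inner ℝ θ v : ℝ) = inner ℝ v θ := real_inner_comm v θ
    rw [e, hcomm]
    have k1 : γ ^ 2 * ‖v‖ ^ 2 ≤ γ ^ 2 * (8 * a ^ 2 * ‖θ‖ ^ 2 + 8 * K_h ^ 2 * lam⁻¹) :=
      mul_le_mul_of_nonneg_left hvsq (sq_nonneg γ)
    have k2 : γ ^ 2 * (8 * a ^ 2 * ‖θ‖ ^ 2) ≤ a * γ * ‖θ‖ ^ 2 := by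
      linarith [mul_nonneg (mul_nonneg (mul_nonneg ha.le hγ0.le) (sq_nonneg ‖θ‖))
        (by linarith : (0:ℝ) ≤ 1 - 8 * (a * γ))]
    have k3 : γ ^ 2 * (8 * K_h ^ 2 * lam⁻¹) ≤ 8 * K_h ^ 2 * γ := by
      have e2 : γ ^ 2 * lam⁻¹ = lam * s ^ 2 := by
        rw [hγdef]; field_simp
      have hss : lam * s ^ 2 ≤ lam * s := by
        linarith [mul_nonneg (mul_nonneg hlam0.le hs0.le) (sub_nonneg.2 hs1)]
      calc γ ^ 2 * (8 * K_h ^ 2 * lam⁻¹) = 8 * K_h ^ 2 * (γ ^ 2 * lam⁻¹) := by ring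
      _ = 8 * K_h ^ 2 * (lam * s ^ 2) := by rw [e2]
      _ ≤ 8 * K_h ^ 2 * (lam * s) := mul_le_mul_of_nonneg_left hss (by positivity)
      _ = 8 * K_h ^ 2 * γ := by rw [hγdef]
    have k4 : 2 * γ * (a * ‖θ‖ ^ 2 - b) ≤ 2 * γ * (inner ℝ v θ : ℝ) :=
      mul_le_mul_of_nonneg_left hinner (by linarith)
    linarith [k1, k2, k3, k4]
  set c := 2 * b + 8 * K_h ^ 2 with hcdef
  have hc0 : 0 < c := by have := sq_nonneg K_h; rw [hcdef]; linarith
  have hA : (0:ℝ) ≤ (1 - a * γ) * ‖θ‖ ^ 2 := mul_nonneg (by linarith) (sq_nonneg _)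
  calc ‖θ - γ • v‖ ^ (2 * (m + 1)) = (‖θ - γ • v‖ ^ 2) ^ (m + 1) := by rw [pow_mul]
  _ ≤ ((1 - a * γ) * ‖θ‖ ^ 2 + γ * c) ^ (m + 1) :=
      pow_le_pow_left₀ (by positivity) hbase _
  _ ≤ (1 + a * γ / 2) ^ m * ((1 - a * γ) * ‖θ‖ ^ 2) ^ (m + 1) +
      ((1 + a * γ / 2) / (a * γ / 2)) ^ m * (γ * c) ^ (m + 1) :=
      kTULA_weighted_add_pow_le _ _ _ hA (mul_nonneg hγ0.le hc0.le) (by linarith) m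
  _ ≤ (1 - a * γ / 2) ^ m * (1 - a * γ) * (‖θ‖ ^ 2) ^ (m + 1) +
      γ * (1 + 2 / a) ^ m * c ^ (m + 1) := by
      apply add_le_add
      · have key : (1 + a * γ / 2) * (1 - a * γ) ≤ 1 - a * γ / 2 := by
          linarith [sq_nonneg (a * γ)]
        have hpos : (0:ℝ) ≤ (1 + a * γ / 2) * (1 - a * γ) := by
          have h4 : a * γ * (a * γ) ≤ a * γ * (1/8) := mul_le_mul_of_nonneg_left haγ hDpos.le
          linarith [sq_nonneg (a*γ)]
        calc (1 + a * γ / 2) ^ m * ((1 - a * γ) * ‖θ‖ ^ 2) ^ (m + 1)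
            = ((1 + a * γ / 2) * (1 - a * γ)) ^ m * ((1 - a * γ) * (‖θ‖ ^ 2) ^ (m + 1)) := by
              rw [mul_pow, mul_pow, pow_succ (1 - a * γ)]; ring
        _ ≤ (1 - a * γ / 2) ^ m * ((1 - a * γ) * (‖θ‖ ^ 2) ^ (m + 1)) :=
              mul_le_mul_of_nonneg_right (pow_le_pow_left₀ hpos key m)
                (mul_nonneg (by linarith) (by positivity))
        _ = (1 - a * γ / 2) ^ m * (1 - a * γ) * (‖θ‖ ^ 2) ^ (m + 1) := by ring
      · have hDγ : ((1 + a * γ / 2) / (a * γ / 2)) * γ = 2 / a + γ := by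
          field_simp
        have hle2 : ((1 + a * γ / 2) / (a * γ / 2)) * γ ≤ 1 + 2 / a := by
          rw [hDγ]; linarith
        have hpos2 : (0:ℝ) ≤ ((1 + a * γ / 2) / (a * γ / 2)) * γ := by
          rw [hDγ]; positivity
        calc ((1 + a * γ / 2) / (a * γ / 2)) ^ m * (γ * c) ^ (m + 1)
            = (((1 + a * γ / 2) / (a * γ / 2)) * γ) ^ m * (γ * c ^ (m + 1)) := by
              rw [mul_pow γ c (m + 1), mul_pow ((1 + a * γ / 2) / (a * γ / 2)) γ m,
                pow_succ γ]; ring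
        _ ≤ (1 + 2 / a) ^ m * (γ * c ^ (m + 1)) :=
              mul_le_mul_of_nonneg_right (pow_le_pow_left₀ hpos2 hle2 m)
                (mul_nonneg hγ0.le (pow_nonneg hc0.le _))
        _ = γ * (1 + 2 / a) ^ m * c ^ (m + 1) := by ring
  _ = (1 - a * γ / 2) ^ m * (1 - a * γ) * ‖θ‖ ^ (2 * (m + 1)) +
      γ * (1 + 2 / a) ^ m * c ^ (m + 1) := by rw [← pow_mul]
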